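/- Fix M > 0, F > 0 and a > 1. For all sufficiently large even N there exists a unique real number m with m = O(1/N) such that, denoting by Δ_1(m) and Δ_{N/2+1}(m) the first and (N/2+1)-th gaps of the unique fixed configuration of N/2 + 2 particles with endpoints 0 and M + m on the segment [0, M + m] with constant force F, the compatibility condition 2m = Δ_1(m) + Δ_{N/2+1}(m) holds. -/

import Mathlib

open Real Filter Set Asymptotics

/-- The repulsion force `f(r) = r^{-a}`. -/
noncomputable def fpow (a r : ℝ) : ℝ := r ^ (-a)

/-- The clockwise gaps of a configuration `x 1 < ... < x N` on the circle of
circumference `L`: `Δ k = x (k+1) - x k` for `1 ≤ k ≤ N-1` and `Δ N = L - x N + x 1`. -/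
def cgap (L : ℝ) (N : ℕ) (x : ℕ → ℝ) (k : ℕ) : ℝ :=
  if k < N then x (k + 1) - x k else L - x N + x 1

/-- A configuration of `N` particles on the circle of circumference `L`,
variant with `0 ≤ x 1 < ... < x N < L`. -/
def CircleConfigA (L : ℝ) (N : ℕ) (x : ℕ → ℝ) : Prop :=
  0 ≤ x 1 ∧ (∀ k, 1 ≤ k → k < N → x k < x (k + 1)) ∧ x N < L

/-- A fixed (critical) configuration on the circle (variant `0 ≤ x 1`, `x N < L`):
`f(Δ (k-1)) + F (x k) - f(Δ k) = 0` for `k = 1, ..., N`, with `Δ 0 = Δ N`. -/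
def CircleFixedA (a L : ℝ) (F : ℝ → ℝ) (N : ℕ) (x : ℕ → ℝ) : Prop :=
  CircleConfigA L N x ∧
  ∀ k, 1 ≤ k → k ≤ N →
    fpow a (cgap L N x (if k = 1 then N else k - 1)) + F (x k) - fpow a (cgap L N x k) = 0

/-- A configuration of `N` particles on the circle of circumference `L`,
variant with `0 < x 1 < ... < x N ≤ L`. -/
def CircleConfigB (L : ℝ) (N : ℕ) (x : ℕ → ℝ) : Prop :=
  0 < x 1 ∧ (∀ k, 1 ≤ k → k < N → x k < x (k + 1)) ∧ x N ≤ L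

/-- A fixed (critical) configuration on the circle (variant `0 < x 1`, `x N ≤ L`):
`f(Δ (k-1)) + F (x k) - f(Δ k) = 0` for `k = 1, ..., N`, with `Δ 0 = Δ N`. -/
def CircleFixedB (a L : ℝ) (F : ℝ → ℝ) (N : ℕ) (x : ℕ → ℝ) : Prop :=
  CircleConfigB L N x ∧
  ∀ k, 1 ≤ k → k ≤ N →
    fpow a (cgap L N x (if k = 1 then N else k - 1)) + F (x k) - fpow a (cgap L N x k) = 0

/-- A fixed configuration of `N` particles on the segment `[0, L]` with constant
force `F`, completely inelastic boundary conditions, and `x 1 = 0`, `x N = L`. -/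
def SegmentFixed (a L F : ℝ) (N : ℕ) (x : ℕ → ℝ) : Prop :=
  x 1 = 0 ∧ x N = L ∧ (∀ k, 1 ≤ k → k < N → x k < x (k + 1)) ∧
  (∀ k, 2 ≤ k → k ≤ N - 1 → fpow a (x k - x (k - 1)) + F - fpow a (x (k + 1) - x k) = 0) ∧
  F - fpow a (x 2) ≤ 0 ∧ 0 ≤ F + fpow a (L - x (N - 1))


namespace Glue

variable {a F : ℝ}

/-- Sum of canonical gaps. -/
noncomputable def Sg (a F : ℝ) (g : ℕ) (t : ℝ) : ℝ :=
  ∑ k ∈ Finset.range g, (t + k * F) ^ (-a⁻¹)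

/-- Canonical configuration. -/
noncomputable def ycan (a F t : ℝ) (k : ℕ) : ℝ :=
  ∑ j ∈ Finset.range (k - 1), (t + j * F) ^ (-a⁻¹)

lemma fpow_rpow (ha : 0 < a) {s : ℝ} (hs : 0 < s) : fpow a (s ^ (-a⁻¹)) = s := by
  rw [fpow, ← Real.rpow_mul hs.le]
  rw [show -a⁻¹ * -a = 1 by field_simp, Real.rpow_one]

lemma rpow_fpow (ha : 0 < a) {r : ℝ} (hr : 0 < r) : (fpow a r) ^ (-a⁻¹) = r := by
  rw [fpow, ← Real.rpow_mul hr.le]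
  rw [show -a * -a⁻¹ = 1 by field_simp, Real.rpow_one]

lemma ycan_gap (a F t : ℝ) {k : ℕ} (hk : 1 ≤ k) :
    ycan a F t (k + 1) - ycan a F t k = (t + (k - 1 : ℕ) * F) ^ (-a⁻¹) := by
  have h1 : k + 1 - 1 = (k - 1) + 1 := by omega
  rw [ycan, ycan, h1, Finset.sum_range_succ]
  ring

lemma Sg_pos (ha : 0 < a) (hF : 0 < F) {g : ℕ} (hg : 1 ≤ g) {t : ℝ} (ht : 0 < t) :
    0 < Sg a F g t := by
  apply Finset.sum_pos
  · intro k hk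
    exact Real.rpow_pos_of_pos (by positivity) _
  · exact ⟨0, Finset.mem_range.2 (by omega)⟩

lemma Sg_strict_anti (ha : 0 < a) (hF : 0 < F) {g : ℕ} (hg : 1 ≤ g) {t₁ t₂ : ℝ}
    (h1 : 0 < t₁) (h12 : t₁ < t₂) : Sg a F g t₂ < Sg a F g t₁ := by
  apply Finset.sum_lt_sum_of_nonempty
  · exact ⟨0, Finset.mem_range.2 (by omega)⟩
  · intro k _
    exact Real.rpow_lt_rpow_of_neg (by positivity) (by linarith) (by simp [ha])

lemma Sg_anti (ha : 0 < a) (hF : 0 < F) {g : ℕ} {t₁ t₂ : ℝ}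
    (h1 : 0 < t₁) (h12 : t₁ ≤ t₂) : Sg a F g t₂ ≤ Sg a F g t₁ := by
  apply Finset.sum_le_sum
  intro k _
  exact Real.rpow_le_rpow_of_nonpos (by positivity) (by linarith) (neg_nonpos.2 (by positivity))

/-- Key inequality: the first and last gap differences are dominated by the
difference of total lengths. -/
lemma key_ineq (ha : 0 < a) (hF : 0 < F) {g : ℕ} (hg : 2 ≤ g) {t₁ t₂ : ℝ}
    (h2 : 0 < t₂) (h21 : t₂ ≤ t₁) :
    (t₂ ^ (-a⁻¹) - t₁ ^ (-a⁻¹)) +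
      ((t₂ + (g - 1 : ℕ) * F) ^ (-a⁻¹) - (t₁ + (g - 1 : ℕ) * F) ^ (-a⁻¹)) ≤
    Sg a F g t₂ - Sg a F g t₁ := by
  have hsum : Sg a F g t₂ - Sg a F g t₁ =
      ∑ k ∈ Finset.range g, ((t₂ + k * F) ^ (-a⁻¹) - (t₁ + k * F) ^ (-a⁻¹)) := by
    rw [Finset.sum_sub_distrib]; rfl
  rw [hsum]
  have hnn : ∀ k ∈ Finset.range g,
      0 ≤ (t₂ + k * F) ^ (-a⁻¹) - (t₁ + k * F) ^ (-a⁻¹) := by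
    intro k _
    have := Real.rpow_le_rpow_of_nonpos (x := t₂ + k * F) (y := t₁ + k * F)
      (by positivity) (by linarith) (z := -a⁻¹) (neg_nonpos.2 (by positivity))
    linarith
  have hsub : ({0, g - 1} : Finset ℕ) ⊆ Finset.range g := by
    intro k hk
    simp only [Finset.mem_insert, Finset.mem_singleton] at hk
    rcases hk with rfl | rfl <;> simp [Finset.mem_range] <;> omega
  have := Finset.sum_le_sum_of_subset_of_nonneg hsub (fun k hk _ => hnn k hk)
  rw [Finset.sum_pair (by omega : (0:ℕ) ≠ g - 1)] at this
  simpa using this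

lemma ycan_one (a F t : ℝ) : ycan a F t 1 = 0 := by simp [ycan]

lemma ycan_top (a F t : ℝ) (g : ℕ) : ycan a F t (g + 1) = Sg a F g t := by
  simp [ycan, Sg]

/-- The canonical configuration is a fixed segment configuration. -/
lemma segmentFixed_ycan (ha : 1 < a) (hF : 0 < F) {g : ℕ} (hg : 2 ≤ g) {t : ℝ}
    (ht : F ≤ t) : SegmentFixed a (Sg a F g t) F (g + 1) (ycan a F t) := by
  have ha0 : (0:ℝ) < a := by linarith
  have htpos : 0 < t := lt_of_lt_of_le hF ht
  have hgap : ∀ k : ℕ, 1 ≤ k → 0 < t + (k - 1 : ℕ) * F := by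
    intro k _; positivity
  refine ⟨ycan_one a F t, ycan_top a F t g, ?_, ?_, ?_, ?_⟩
  · intro k hk _
    have := ycan_gap a F t hk
    nlinarith [Real.rpow_pos_of_pos (hgap k hk) (-a⁻¹)]
  · intro k hk2 hkle
    have hk1 : 1 ≤ k - 1 := by omega
    have e1 : (k - 1) + 1 = k := by omega
    have g1 := ycan_gap a F t hk1
    rw [e1] at g1
    have g2 := ycan_gap a F t (by omega : 1 ≤ k)
    rw [g1, g2, fpow_rpow ha0 (hgap _ hk1), fpow_rpow ha0 (hgap _ (by omega))]
    have : ((k - 1 - 1 : ℕ) : ℝ) + 1 = ((k - 1 : ℕ) : ℝ) := by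
      have : (k - 1 - 1 : ℕ) + 1 = k - 1 := by omega
      exact_mod_cast congrArg (Nat.cast : ℕ → ℝ) this
    nlinarith [this]
  · have h2 : ycan a F t 2 = t ^ (-a⁻¹) := by
      have := ycan_gap a F t (le_refl 1)
      simpa [ycan_one] using this
    rw [h2, fpow_rpow ha0 htpos]
    linarith
  · have hgapg := ycan_gap a F t (by omega : 1 ≤ g)
    have e : g + 1 - 1 = g := by omega
    rw [e, ← ycan_top a F t g, hgapg, fpow_rpow ha0 (hgap g (by omega))]
    positivity

/-- Characterization: every fixed segment configuration is the canonical one. -/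
lemma segmentFixed_char (ha : 1 < a) (hF : 0 < F) {g : ℕ} (hg : 2 ≤ g) {L : ℝ} {y : ℕ → ℝ}
    (hy : SegmentFixed a L F (g + 1) y) :
    ∃ t, F ≤ t ∧ Sg a F g t = L ∧
      y 2 - y 1 = t ^ (-a⁻¹) ∧ y (g + 1) - y g = (t + (g - 1 : ℕ) * F) ^ (-a⁻¹) := by
  have ha0 : (0:ℝ) < a := by linarith
  obtain ⟨h1, hTop, hMono, hInt, hB1, hB2⟩ := hy
  set t := fpow a (y 2 - y 1) with htdef
  have htF : F ≤ t := by
    have : y 2 - y 1 = y 2 := by rw [h1]; ring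
    rw [htdef, this]; linarith
  have ht0 : 0 < t := lt_of_lt_of_le hF htF
  have hgappos : ∀ k, 1 ≤ k → k ≤ g → 0 < y (k + 1) - y k := by
    intro k hk1 hkg
    have := hMono k hk1 (by omega)
    linarith
  have claim : ∀ k : ℕ, 1 ≤ k → k ≤ g →
      fpow a (y (k + 1) - y k) = t + ((k - 1 : ℕ) : ℝ) * F := by
    intro k
    induction k with
    | zero => omega
    | succ n ih =>
      intro _ hkg
      rcases Nat.eq_zero_or_pos n with rfl | hn1
      · simp [htdef]
      · have hInt' := hInt (n + 1) (by omega) (by omega)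
        simp only [Nat.add_sub_cancel] at hInt'
        have ihn := ih hn1 (by omega)
        have hcast : ((n - 1 : ℕ) : ℝ) + 1 = ((n + 1 - 1 : ℕ) : ℝ) := by
          have : (n - 1 : ℕ) + 1 = n + 1 - 1 := by omega
          exact_mod_cast congrArg (Nat.cast : ℕ → ℝ) this
        nlinarith [hInt', ihn, hcast]
  have hgapval : ∀ k, 1 ≤ k → k ≤ g →
      y (k + 1) - y k = (t + ((k - 1 : ℕ) : ℝ) * F) ^ (-a⁻¹) := by
    intro k hk1 hkg
    rw [← claim k hk1 hkg, rpow_fpow ha0 (hgappos k hk1 hkg)]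
  have hsum : Sg a F g t = L := by
    have htel : ∑ i ∈ Finset.range g, (y (i + 1 + 1) - y (i + 1)) = y (g + 1) - y 1 :=
      Finset.sum_range_sub (fun i => y (i + 1)) g
    have : ∑ i ∈ Finset.range g, (y (i + 1 + 1) - y (i + 1)) = Sg a F g t := by
      apply Finset.sum_congr rfl
      intro i hi
      rw [hgapval (i + 1) (by omega) (Nat.succ_le_of_lt (Finset.mem_range.1 hi))]
      simp
    rw [this] at htel
    rw [htel, hTop, h1]; ring
  refine ⟨t, htF, hsum, ?_, ?_⟩
  · have := hgapval 1 le_rfl (by omega)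
    simpa [h1] using this
  · exact hgapval g (by omega) le_rfl

/-- Existence of the parameter `t` solving `Sg g t = L`. -/
lemma exists_t (ha : 1 < a) (hF : 0 < F) {g : ℕ} (hg : 1 ≤ g) {L : ℝ} (hL0 : 0 < L)
    (hLle : L ≤ Sg a F g F) : ∃ t, F ≤ t ∧ Sg a F g t = L := by
  have ha0 : (0:ℝ) < a := by linarith
  have hgR : (0:ℝ) < g := by exact_mod_cast hg
  set T : ℝ := ((g : ℝ) / L) ^ a + F with hTdef
  have hGL : (0:ℝ) < ((g : ℝ) / L) ^ a := Real.rpow_pos_of_pos (by positivity) a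
  have hTF : F ≤ T := by rw [hTdef]; linarith
  have hTpos : 0 < T := lt_of_lt_of_le hF hTF
  have hTb : Sg a F g T ≤ L := by
    have hterm : ∀ k ∈ Finset.range g, (T + (k:ℝ) * F) ^ (-a⁻¹) ≤ L / g := by
      intro k _
      have h1 : T ^ (-a⁻¹) ≤ (((g : ℝ) / L) ^ a) ^ (-a⁻¹) := by
        apply Real.rpow_le_rpow_of_nonpos hGL (by rw [hTdef]; linarith)
          (neg_nonpos.2 (by positivity))
      have h2 : (((g : ℝ) / L) ^ a) ^ (-a⁻¹) = L / g := by
        rw [← Real.rpow_mul (by positivity), show a * -a⁻¹ = -1 by field_simp,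
          Real.rpow_neg_one, inv_div]
      have h3 : (T + (k:ℝ) * F) ^ (-a⁻¹) ≤ T ^ (-a⁻¹) := by
        apply Real.rpow_le_rpow_of_nonpos hTpos (le_add_of_nonneg_right (by positivity))
          (neg_nonpos.2 (by positivity))
      linarith
    calc Sg a F g T ≤ ∑ _k ∈ Finset.range g, L / g := Finset.sum_le_sum hterm
    _ = L := by rw [Finset.sum_const, Finset.card_range, nsmul_eq_mul]; field_simp
  have hcont : ContinuousOn (Sg a F g) (Icc F T) := by
    apply continuousOn_finset_sum
    intro k _
    apply ContinuousOn.rpow_const (by fun_prop)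
    intro x hx
    have hx1 : F ≤ x := hx.1
    have hkF : 0 ≤ (k:ℝ) * F := by positivity
    exact Or.inl (by nlinarith)
  have := intermediate_value_Icc' hTF hcont
  have hmem : L ∈ Icc (Sg a F g T) (Sg a F g F) := ⟨hTb, hLle⟩
  obtain ⟨t, htmem, htval⟩ := this hmem
  exact ⟨t, htmem.1, htval⟩

/-- Lower bound on `t` from the equation `Sg g t = L`. -/
lemma t_large (ha : 1 < a) (hF : 0 < F) {g : ℕ} (hg : 1 ≤ g) {t L : ℝ} (ht : F ≤ t)
    (hS : Sg a F g t = L) (hL0 : 0 < L) :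
    ((g:ℝ) / L) ^ a - g * F ≤ t := by
  have ha0 : (0:ℝ) < a := by linarith
  have hgR : (0:ℝ) < g := by exact_mod_cast hg
  have ht0 : 0 < t := lt_of_lt_of_le hF ht
  have h1 : (g:ℝ) * (t + g * F) ^ (-a⁻¹) ≤ L := by
    rw [← hS]
    have : ∀ k ∈ Finset.range g, (t + (g:ℝ) * F) ^ (-a⁻¹) ≤ (t + (k:ℝ) * F) ^ (-a⁻¹) := by
      intro k hk
      have hkg : (k:ℝ) ≤ (g:ℝ) := by
        exact_mod_cast (Finset.mem_range.1 hk).le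
      apply Real.rpow_le_rpow_of_nonpos (by positivity) (by nlinarith)
        (neg_nonpos.2 (by positivity))
    calc (g:ℝ) * (t + g * F) ^ (-a⁻¹)
        = ∑ _k ∈ Finset.range g, (t + (g:ℝ) * F) ^ (-a⁻¹) := by
          rw [Finset.sum_const, Finset.card_range, nsmul_eq_mul]
    _ ≤ Sg a F g t := Finset.sum_le_sum this
  have hp : 0 < (t + (g:ℝ) * F) ^ (-a⁻¹) := Real.rpow_pos_of_pos (by positivity) _
  have h2 : (L / g) ^ (-a) ≤ ((t + (g:ℝ) * F) ^ (-a⁻¹)) ^ (-a) := by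
    apply Real.rpow_le_rpow_of_nonpos hp
      (by rw [le_div_iff₀ hgR]; nlinarith [h1]) (by linarith)
  have h3 : ((t + (g:ℝ) * F) ^ (-a⁻¹)) ^ (-a) = t + g * F := by
    rw [← Real.rpow_mul (by positivity), show -a⁻¹ * -a = 1 by field_simp, Real.rpow_one]
  have h4 : (L / g) ^ (-a) = ((g:ℝ) / L) ^ a := by
    rw [Real.rpow_neg (by positivity), ← Real.inv_rpow (by positivity), inv_div]
  rw [h3, h4] at h2
  linarith

/-- Upper bound on the first (largest) gap. -/
lemma gap_bound (ha : 1 < a) (hF : 0 < F) {g : ℕ} (hg : 1 ≤ g) {t L B : ℝ} (ht : F ≤ t)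
    (hS : Sg a F g t = L) (hL0 : 0 < L) (hLB : L ≤ B)
    (hcond : 2 * ((g:ℝ) * F) ≤ ((g:ℝ) / B) ^ a) : t ^ (-a⁻¹) ≤ 2 * B / g := by
  have ha0 : (0:ℝ) < a := by linarith
  have hgR : (0:ℝ) < g := by exact_mod_cast hg
  have hB0 : 0 < B := lt_of_lt_of_le hL0 hLB
  have hGB : (0:ℝ) < ((g : ℝ) / B) ^ a := Real.rpow_pos_of_pos (by positivity) a
  have hmono : ((g:ℝ) / B) ^ a ≤ ((g:ℝ) / L) ^ a :=
    Real.rpow_le_rpow (by positivity) (div_le_div_of_nonneg_left hgR.le hL0 hLB) ha0.le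
  have htlow : (1/2 : ℝ) * ((g:ℝ) / B) ^ a ≤ t := by
    have := t_large ha hF hg ht hS hL0
    linarith
  have h1 : t ^ (-a⁻¹) ≤ ((1/2 : ℝ) * ((g:ℝ) / B) ^ a) ^ (-a⁻¹) :=
    Real.rpow_le_rpow_of_nonpos (by positivity) htlow (neg_nonpos.2 (by positivity))
  have h2 : ((1/2 : ℝ) * ((g:ℝ) / B) ^ a) ^ (-a⁻¹)
      = (1/2 : ℝ) ^ (-a⁻¹ : ℝ) * (((g:ℝ) / B) ^ a) ^ (-a⁻¹) :=
    Real.mul_rpow (by norm_num) hGB.le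
  have h3 : (((g:ℝ) / B) ^ a) ^ (-a⁻¹) = B / g := by
    rw [← Real.rpow_mul (by positivity), show a * -a⁻¹ = -1 by field_simp,
      Real.rpow_neg_one, inv_div]
  have h4 : (1/2 : ℝ) ^ (-a⁻¹ : ℝ) ≤ 2 := by
    have : (1/2 : ℝ) ^ (-a⁻¹ : ℝ) = 2 ^ (a⁻¹ : ℝ) := by
      rw [one_div, Real.inv_rpow (by norm_num), Real.rpow_neg (by norm_num), inv_inv]
    rw [this]
    calc (2:ℝ) ^ (a⁻¹ : ℝ) ≤ 2 ^ (1:ℝ) :=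
      Real.rpow_le_rpow_of_exponent_le one_le_two (by
        rw [inv_le_one_iff₀]; right; linarith)
    _ = 2 := Real.rpow_one 2
  have hBg : (0:ℝ) < B / g := by positivity
  calc t ^ (-a⁻¹) ≤ (1/2 : ℝ) ^ (-a⁻¹ : ℝ) * (B / g) := by rw [← h3, ← h2]; exact h1
  _ ≤ 2 * (B / g) := by nlinarith [Real.rpow_pos_of_pos (by norm_num : (0:ℝ) < 1/2) (-a⁻¹ : ℝ)]
  _ = 2 * B / g := by ring

/-- Comparison: two solutions of the glueing conditions must coincide. -/
lemma compare_lt (ha : 1 < a) (hF : 0 < F) {g : ℕ} (hg : 2 ≤ g) {M t₁ t₂ m₁ m₂ : ℝ}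
    (h1F : F ≤ t₁) (h2F : F ≤ t₂)
    (hS1 : Sg a F g t₁ = M + m₁) (hS2 : Sg a F g t₂ = M + m₂)
    (hm1 : 2 * m₁ = t₁ ^ (-a⁻¹) + (t₁ + (g - 1 : ℕ) * F) ^ (-a⁻¹))
    (hm2 : 2 * m₂ = t₂ ^ (-a⁻¹) + (t₂ + (g - 1 : ℕ) * F) ^ (-a⁻¹))
    (hlt : m₁ < m₂) : False := by
  have ha0 : (0:ℝ) < a := by linarith
  have ht1 : 0 < t₁ := lt_of_lt_of_le hF h1F
  have ht2 : 0 < t₂ := lt_of_lt_of_le hF h2F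
  have ht21 : t₂ ≤ t₁ := by
    by_contra hcon
    push_neg at hcon
    have := Sg_strict_anti (F := F) ha0 hF (by omega : 1 ≤ g) ht1 hcon
    rw [hS1, hS2] at this
    linarith
  have hkey := key_ineq (F := F) ha0 hF hg ht2 ht21
  rw [hS1, hS2] at hkey
  linarith

/-- Eventual conditions on the number of gaps `g`. -/
lemma eventually_conds (ha : 1 < a) (hF : 0 < F) {M : ℝ} (hM : 0 < M) :
    ∀ᶠ g : ℕ in atTop,
      2 * M ≤ Sg a F g F ∧ 2 * ((g:ℝ) * F) ≤ ((g:ℝ) / (2 * M)) ^ a := by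
  have ha0 : (0:ℝ) < a := by linarith
  have hainv : a⁻¹ < 1 := by
    rw [inv_lt_one_iff₀]; right; exact ha
  have h1 : Tendsto (fun g : ℕ => (g:ℝ) ^ (1 - a⁻¹) * F ^ (-a⁻¹ : ℝ)) atTop atTop :=
    Tendsto.atTop_mul_const (Real.rpow_pos_of_pos hF _)
      ((tendsto_rpow_atTop (by linarith)).comp tendsto_natCast_atTop_atTop)
  have h2 : Tendsto (fun g : ℕ => (g:ℝ) ^ (a - 1)) atTop atTop :=
    (tendsto_rpow_atTop (by linarith)).comp tendsto_natCast_atTop_atTop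
  filter_upwards [h1.eventually_ge_atTop (2 * M),
    h2.eventually_ge_atTop (2 * F * (2 * M) ^ a), eventually_ge_atTop 1] with g hg1 hg2 hgpos
  have hgR : (0:ℝ) < g := by exact_mod_cast hgpos
  constructor
  · have hA : (g:ℝ) * ((g:ℝ) * F) ^ (-a⁻¹) ≤ Sg a F g F := by
      have hterm : ∀ k ∈ Finset.range g, ((g:ℝ) * F) ^ (-a⁻¹) ≤ (F + (k:ℝ) * F) ^ (-a⁻¹) := by
        intro k hk
        have hk1 : (k:ℝ) + 1 ≤ (g:ℝ) := by exact_mod_cast Finset.mem_range.1 hk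
        apply Real.rpow_le_rpow_of_nonpos (by positivity) (by nlinarith)
          (neg_nonpos.2 (by positivity))
      calc (g:ℝ) * ((g:ℝ) * F) ^ (-a⁻¹)
          = ∑ _k ∈ Finset.range g, ((g:ℝ) * F) ^ (-a⁻¹) := by
            rw [Finset.sum_const, Finset.card_range, nsmul_eq_mul]
      _ ≤ Sg a F g F := Finset.sum_le_sum hterm
    have hB : (g:ℝ) * ((g:ℝ) * F) ^ (-a⁻¹) = (g:ℝ) ^ (1 - a⁻¹) * F ^ (-a⁻¹ : ℝ) := by
      rw [Real.mul_rpow hgR.le hF.le,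
        show (1:ℝ) - a⁻¹ = 1 + -a⁻¹ by ring, Real.rpow_add hgR, Real.rpow_one]
      ring
    linarith
  · have hMa : (0:ℝ) < (2 * M) ^ a := Real.rpow_pos_of_pos (by linarith) a
    have hdiv : ((g:ℝ) / (2 * M)) ^ a = (g:ℝ) ^ a / (2 * M) ^ a :=
      Real.div_rpow hgR.le (by linarith) a
    have hsplit : (g:ℝ) ^ a = (g:ℝ) ^ (a - 1) * g := by
      rw [show a = (a - 1) + 1 by ring, Real.rpow_add hgR, Real.rpow_one]; ring_nf
    rw [hdiv, hsplit, le_div_iff₀ hMa]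
    nlinarith

end Glue

set_option maxHeartbeats 1000000 in
/-- For `M, F > 0` and all sufficiently large even `N`, there is a unique
`m = O(1/N)` such that the fixed configuration of `N/2 + 2` particles on `[0, M + m]` with
constant force `F` satisfies the glueing compatibility condition
`2 m = Δ 1 (m) + Δ (N/2 + 1) (m)`. -/
theorem glueing_parameter_exists_unique (a M F : ℝ) (ha : 1 < a) (hM : 0 < M) (hF : 0 < F) :
    ∃ C > 0, ∃ N₀ : ℕ, ∀ N ≥ N₀, Even N →
      ∃! m : ℝ, |m| ≤ C / N ∧
        ∃ y : ℕ → ℝ, SegmentFixed a (M + m) F (N / 2 + 2) y ∧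
          2 * m = (y 2 - y 1) + (y (N / 2 + 2) - y (N / 2 + 1)) := by
  classical
  have ha0 : (0:ℝ) < a := by linarith
  obtain ⟨g₀, hg₀⟩ := Filter.eventually_atTop.1 (Glue.eventually_conds ha hF hM)
  refine ⟨40 * M, by linarith, max (2 * g₀) 80, ?_⟩
  intro N hN _
  set g : ℕ := N / 2 + 1 with hgdef
  have hNge : 80 ≤ N := le_trans (le_max_right _ _) hN
  have hN2 : 2 * g₀ ≤ N := le_trans (le_max_left _ _) hN
  have hg2 : 2 ≤ g := by omega
  obtain ⟨hc1, hc2⟩ := hg₀ g (by omega)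
  have hNR : (80:ℝ) ≤ (N:ℝ) := by exact_mod_cast hNge
  have hNpos : (0:ℝ) < N := by linarith
  have hgR : (0:ℝ) < (g:ℝ) := by exact_mod_cast Nat.lt_of_lt_of_le two_pos hg2
  have hgN : (N:ℝ) ≤ 2 * g := by
    have : N ≤ 2 * g := by omega
    exact_mod_cast this
  set C : ℝ := 40 * M with hC
  have hCN : C / N ≤ M / 2 := by
    rw [div_le_iff₀ hNpos, hC]; nlinarith
  have hCNpos : 0 < C / N := by rw [hC]; positivity
  -- the selection of the parameter `t` for each admissible `m`
  have hPex : ∀ m : ℝ, 0 ≤ m → m ≤ C / N → ∃ t, F ≤ t ∧ Glue.Sg a F g t = M + m := by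
    intro m h0 h1
    exact Glue.exists_t ha hF (by omega : 1 ≤ g) (by linarith) (by linarith)
  set tsel : ℝ → ℝ := fun m =>
    if h : ∃ t, F ≤ t ∧ Glue.Sg a F g t = M + m then h.choose else F with htsel
  have htsel_spec : ∀ m, 0 ≤ m → m ≤ C / N →
      F ≤ tsel m ∧ Glue.Sg a F g (tsel m) = M + m := by
    intro m h0 h1
    have hex := hPex m h0 h1
    simp only [htsel, dif_pos hex]
    exact hex.choose_spec
  set phi : ℝ → ℝ := fun m =>
    (tsel m) ^ (-a⁻¹) + (tsel m + ((g - 1 : ℕ) : ℝ) * F) ^ (-a⁻¹) with hphi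
  set hfun : ℝ → ℝ := fun m => phi m - 2 * m with hhfun
  -- the key two-point estimate
  have hkey : ∀ m₁ m₂, 0 ≤ m₁ → m₂ ≤ C / N → m₁ ≤ m₂ →
      0 ≤ phi m₂ - phi m₁ ∧ phi m₂ - phi m₁ ≤ m₂ - m₁ := by
    intro m₁ m₂ h0 h1 h12
    have hs1 := htsel_spec m₁ h0 (by linarith)
    have hs2 := htsel_spec m₂ (by linarith) h1
    have ht1pos : 0 < tsel m₁ := lt_of_lt_of_le hF hs1.1
    have ht2pos : 0 < tsel m₂ := lt_of_lt_of_le hF hs2.1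
    have ht21 : tsel m₂ ≤ tsel m₁ := by
      by_contra hcon
      push_neg at hcon
      have := Glue.Sg_strict_anti (F := F) ha0 hF (by omega : 1 ≤ g) ht1pos hcon
      rw [hs1.2, hs2.2] at this
      linarith
    constructor
    · have e1 : (tsel m₁) ^ (-a⁻¹) ≤ (tsel m₂) ^ (-a⁻¹) :=
        Real.rpow_le_rpow_of_nonpos ht2pos ht21 (neg_nonpos.2 (by positivity))
      have e2 : (tsel m₁ + ((g - 1 : ℕ) : ℝ) * F) ^ (-a⁻¹)
          ≤ (tsel m₂ + ((g - 1 : ℕ) : ℝ) * F) ^ (-a⁻¹) :=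
        Real.rpow_le_rpow_of_nonpos (by positivity) (by linarith)
          (neg_nonpos.2 (by positivity))
      simp only [hphi]
      linarith
    · have := Glue.key_ineq (F := F) ha0 hF hg2 ht2pos ht21
      rw [hs1.2, hs2.2] at this
      simp only [hphi]
      linarith
  have hlip : LipschitzOnWith 2 hfun (Icc 0 (C / N)) := by
    apply LipschitzOnWith.of_dist_le_mul
    intro x hx y hy
    rw [Real.dist_eq, Real.dist_eq]
    have hcast : ((2 : NNReal) : ℝ) = 2 := by norm_num
    rw [hcast]
    rcases le_total x y with hxy | hxy
    · have hk := hkey x y hx.1 hy.2 hxy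
      have habs : |x - y| = y - x := by rw [abs_sub_comm, abs_of_nonneg (by linarith)]
      rw [habs]
      simp only [hhfun]
      rw [abs_le]
      constructor <;> nlinarith [hk.1, hk.2]
    · have hk := hkey y x hy.1 hx.2 hxy
      have habs : |x - y| = x - y := abs_of_nonneg (by linarith)
      rw [habs]
      simp only [hhfun]
      rw [abs_le]
      constructor <;> nlinarith [hk.1, hk.2]
  have hcont : ContinuousOn hfun (Icc 0 (C / N)) := hlip.continuousOn
  have hs0 := htsel_spec 0 le_rfl (by linarith)
  have ht0pos : 0 < tsel 0 := lt_of_lt_of_le hF hs0.1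
  have hpos0 : 0 < hfun 0 := by
    simp only [hhfun, hphi]
    have e1 : 0 < (tsel 0) ^ (-a⁻¹) := Real.rpow_pos_of_pos ht0pos _
    have e2 : 0 < (tsel 0 + ((g - 1 : ℕ) : ℝ) * F) ^ (-a⁻¹) :=
      Real.rpow_pos_of_pos (by positivity) _
    linarith
  have hS0 : Glue.Sg a F g (tsel 0) = M := by rw [hs0.2, add_zero]
  have hgap0 : (tsel 0) ^ (-a⁻¹) ≤ 2 * (2 * M) / g :=
    Glue.gap_bound ha hF (by omega : 1 ≤ g) hs0.1 hS0 hM (by linarith) hc2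
  have hphi0 : phi 0 ≤ 16 * M / N := by
    have e2 : (tsel 0 + ((g - 1 : ℕ) : ℝ) * F) ^ (-a⁻¹) ≤ (tsel 0) ^ (-a⁻¹) :=
      Real.rpow_le_rpow_of_nonpos ht0pos (le_add_of_nonneg_right (by positivity))
        (neg_nonpos.2 (by positivity))
    have h8 : (8 : ℝ) * M / g ≤ 16 * M / N := by
      rw [div_le_div_iff₀ hgR hNpos]
      have := mul_le_mul_of_nonneg_left hgN (by linarith : (0:ℝ) ≤ 8 * M)
      linarith
    have : phi 0 ≤ 2 * (2 * (2 * M) / g) := by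
      simp only [hphi]
      linarith
    calc phi 0 ≤ 2 * (2 * (2 * M) / g) := this
    _ = 8 * M / g := by ring
    _ ≤ 16 * M / N := h8
  have hneg : hfun (C / N) < 0 := by
    have hk := (hkey 0 (C / N) le_rfl le_rfl (by linarith)).2
    have h24 : (0:ℝ) < 24 * M / N := by positivity
    have hCNval : C / N = 40 * M / N := by rw [hC]
    simp only [hhfun]
    have e2 : (16:ℝ) * M / N - 40 * M / N = -(24 * M / N) := by ring
    linarith [hk, hphi0, h24, hCNval, e2]
  obtain ⟨m₀, hm₀mem, hm₀⟩ :=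
    intermediate_value_Icc' (by linarith : (0:ℝ) ≤ C / N) hcont ⟨hneg.le, hpos0.le⟩
  have hs := htsel_spec m₀ hm₀mem.1 hm₀mem.2
  have hphim₀ : phi m₀ = 2 * m₀ := by
    have : hfun m₀ = 0 := hm₀
    simp only [hhfun] at this
    linarith
  have h2m₀ : 2 * m₀ = (tsel m₀) ^ (-a⁻¹) + (tsel m₀ + ((g - 1 : ℕ) : ℝ) * F) ^ (-a⁻¹) := by
    rw [← hphim₀]
  refine ⟨m₀, ⟨abs_le.2 ⟨by linarith [hm₀mem.1], hm₀mem.2⟩, ?_⟩, ?_⟩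
  · refine ⟨Glue.ycan a F (tsel m₀), ?_, ?_⟩
    · have := Glue.segmentFixed_ycan ha hF hg2 hs.1
      rw [hs.2] at this
      exact this
    · have hgap1 : Glue.ycan a F (tsel m₀) 2 - Glue.ycan a F (tsel m₀) 1
          = (tsel m₀) ^ (-a⁻¹) := by
        have := Glue.ycan_gap a F (tsel m₀) (le_refl 1)
        simpa using this
      have hgapg : Glue.ycan a F (tsel m₀) (g + 1) - Glue.ycan a F (tsel m₀) g
          = (tsel m₀ + ((g - 1 : ℕ) : ℝ) * F) ^ (-a⁻¹) :=
        Glue.ycan_gap a F (tsel m₀) (by omega)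
      show 2 * m₀ = _ + (Glue.ycan a F (tsel m₀) (g + 1) - Glue.ycan a F (tsel m₀) g)
      rw [hgap1, hgapg, h2m₀]
  · rintro m' ⟨habs', y', hy', hcompat'⟩
    obtain ⟨t', ht'F, ht'S, hΔ1, hΔg⟩ :=
      Glue.segmentFixed_char ha hF hg2 (show SegmentFixed a (M + m') F (g + 1) y' from hy')
    have hidx : y' (N / 2 + 2) - y' (N / 2 + 1) = y' (g + 1) - y' g := rfl
    have h2m' : 2 * m' = t' ^ (-a⁻¹) + (t' + ((g - 1 : ℕ) : ℝ) * F) ^ (-a⁻¹) := by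
      rw [hcompat', hidx, hΔ1, hΔg]
    rcases lt_trichotomy m' m₀ with hlt | heq | hgt
    · exact (Glue.compare_lt ha hF hg2 ht'F hs.1 ht'S hs.2 h2m' h2m₀ hlt).elim
    · exact heq
    · exact (Glue.compare_lt ha hF hg2 hs.1 ht'F hs.2 ht'S h2m₀ h2m' hgt).elim
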